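/- arXiv:1307.4794 — 3 statements merged into one kernel-verified Lean document; each statement's English description precedes it below -/
import Mathlib

section
/- Let $G$ be a group acting by homeomorphisms on a compact Hausdorff space $X$ and let $p \in X$. Then $\overline{G \cdot p}$ is a minimal closed $G$-invariant set if and only if for every open $U \subseteq X$ containing $p$, the return set $N(p, U) = \{g \in G : g \cdot p \in U\}$ is syndetic, i.e. there exist finitely many $g_1, \dots, g_n \in G$ with $G = \bigcup_{i=1}^n g_i \cdot N(p,U)$. -/
theorem almost_periodic_iff_syndetic_return {G X : Type*} [Group G] [TopologicalSpace X]
    [CompactSpace X] [T2Space X] [MulAction G X]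
    (hcont : ∀ g : G, Continuous (fun x : X => g • x))
    (p : X) :
    ((∀ g : G, ∀ x ∈ closure (MulAction.orbit G p),
        g • x ∈ closure (MulAction.orbit G p)) ∧
      ∀ N ⊆ closure (MulAction.orbit G p), N.Nonempty → IsClosed N →
        (∀ g : G, ∀ x ∈ N, g • x ∈ N) → N = closure (MulAction.orbit G p)) ↔
    (∀ U : Set X, IsOpen U → p ∈ U →
      ∃ F : Finset G, ∀ g : G, ∃ h ∈ F, ∃ k : G, k • p ∈ U ∧ g = h * k) := by
  classical
  set Y := closure (MulAction.orbit G p) with hYdef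
  have hpY : p ∈ Y := subset_closure (MulAction.mem_orbit_self p)
  have hYinv : ∀ g : G, ∀ x ∈ Y, g • x ∈ Y := by
    intro g x hx
    have h1 : (fun y : X => g • y) '' Y ⊆
        closure ((fun y : X => g • y) '' (MulAction.orbit G p)) :=
      image_closure_subset_closure_image (hcont g)
    have h2 : (fun y : X => g • y) '' (MulAction.orbit G p) ⊆ MulAction.orbit G p := by
      rintro _ ⟨_, ⟨h, rfl⟩, rfl⟩
      exact ⟨g * h, (mul_smul g h p)⟩
    exact closure_mono h2 (h1 ⟨x, hx, rfl⟩)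
  constructor
  · rintro ⟨-, hmin⟩ U hU hpU
    have hYc : IsCompact Y := isClosed_closure.isCompact
    have hcover : Y ⊆ ⋃ g : G, (fun x : X => g • x) ⁻¹' U := by
      intro x hx
      by_contra hxc
      set W : Set X := Y ∩ ⋂ g : G, (fun x : X => g • x) ⁻¹' Uᶜ with hWdef
      have hxW : x ∈ W := by
        refine ⟨hx, Set.mem_iInter.2 fun g => ?_⟩
        intro hgu
        exact hxc (Set.mem_iUnion.2 ⟨g, hgu⟩)
      have hWsub : W ⊆ Y := Set.inter_subset_left
      have hWcl : IsClosed W :=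
        isClosed_closure.inter
          (isClosed_iInter fun g => (hU.isClosed_compl).preimage (hcont g))
      have hWinv : ∀ g : G, ∀ y ∈ W, g • y ∈ W := by
        rintro g y ⟨hyY, hyI⟩
        refine ⟨hYinv g y hyY, Set.mem_iInter.2 fun h => ?_⟩
        have := Set.mem_iInter.1 hyI (h * g)
        simpa [mul_smul] using this
      have hWY : W = Y := hmin W hWsub ⟨x, hxW⟩ hWcl hWinv
      have hpW : p ∈ W := hWY ▸ hpY
      have := Set.mem_iInter.1 hpW.2 1
      exact this (by simpa using hpU)
    obtain ⟨t, ht⟩ := hYc.elim_finite_subcover (fun g : G => (fun x : X => g • x) ⁻¹' U)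
      (fun g => hU.preimage (hcont g)) hcover
    refine ⟨t.image (·⁻¹), fun g => ?_⟩
    have hgp : g • p ∈ Y := subset_closure (MulAction.mem_orbit p g)
    obtain ⟨i, hi, hmem⟩ := Set.mem_iUnion₂.1 (ht hgp)
    refine ⟨i⁻¹, Finset.mem_image_of_mem _ hi, i * g, ?_, by group⟩
    simpa [mul_smul] using hmem
  · intro hsynd
    refine ⟨hYinv, fun N hNY hNne hNcl hNinv => ?_⟩
    have hpN : p ∈ N := by
      by_contra hpN
      have hsep : SeparatedNhds ({p} : Set X) N :=
        NormalSpace.normal _ _ isClosed_singleton hNcl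
          (Set.disjoint_singleton_left.2 hpN)
      obtain ⟨U, V, hUo, hVo, hpU, hNV, hUV⟩ := hsep
      obtain ⟨q, hqN⟩ := hNne
      obtain ⟨F, hF⟩ := hsynd U hUo (hpU rfl)
      set O : Set X := ⋂ h ∈ F, (fun x : X => h⁻¹ • x) ⁻¹' V with hOdef
      have hqO : q ∈ O := Set.mem_iInter₂.2 fun h _ => hNV (hNinv h⁻¹ q hqN)
      have hOopen : IsOpen O := isOpen_biInter_finset fun h _ => hVo.preimage (hcont h⁻¹)
      have hqY : q ∈ Y := hNY hqN
      obtain ⟨x, hxO, hxorb⟩ :=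
        (mem_closure_iff.1 hqY O hOopen hqO)
      obtain ⟨g, rfl⟩ := hxorb
      obtain ⟨h, hhF, k, hkU, hgk⟩ := hF g
      have hkV : k • p ∈ V := by
        have := Set.mem_iInter₂.1 hxO h hhF
        have hk : k = h⁻¹ * g := by rw [hgk]; group
        simpa [hk, mul_smul] using this
      exact Set.disjoint_left.1 hUV hkU hkV
    refine le_antisymm hNY ?_
    refine closure_minimal ?_ hNcl
    rintro _ ⟨g, rfl⟩
    exact hNinv g p hpN
end

section
/- Let $G$ be a group and $\mathcal{H}$ a family of subgroups of $G$ with the following property for a fixed $k \in \mathbb{N}$: for any $H_0, \dots, H_k \in \mathcal{H}$ (i.e. any $k+1$ members, with repetitions allowed) there exists $i \leq k$ such that $\bigcap_{j \leq k} H_j = \bigcap_{j \leq k, j \neq i} H_j$. Then for every finite subfamily $F \subseteq \mathcal{H}$ there is a subfamily $F' \subseteq F$ with $|F'| \leq k$ and $\bigcap_{H \in F} H = \bigcap_{H \in F'} H$. -/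
theorem baldwin_saxl_combinatorial {G : Type*} [Group G] (𝓗 : Set (Subgroup G)) (k : ℕ)
    (hred : ∀ H : Fin (k + 1) → Subgroup G, (∀ i, H i ∈ 𝓗) →
      ∃ i : Fin (k + 1), (⨅ j, H j) = ⨅ j ∈ {j : Fin (k + 1) | j ≠ i}, H j) :
    ∀ F : Finset (Subgroup G), ↑F ⊆ 𝓗 →
      ∃ F' ⊆ F, F'.card ≤ k ∧ F.inf id = F'.inf id := by
  intro F
  induction F using Finset.strongInduction with
  | _ F IH =>
    intro hF
    classical
    by_cases hcard : F.card ≤ k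
    · exact ⟨F, subset_rfl, hcard, rfl⟩
    · push_neg at hcard
      obtain ⟨S, hSF, hS⟩ := Finset.exists_subset_card_eq hcard
      set e := S.equivFinOfCardEq hS with he
      have H : Fin (k + 1) → Subgroup G := fun j => (e.symm j : Subgroup G)
      obtain ⟨i, hi⟩ := hred (fun j => (e.symm j : Subgroup G))
        (fun j => hF (hSF (e.symm j).2))
      have hinj : Function.Injective (fun j => ((e.symm j : S) : Subgroup G)) :=
        Subtype.coe_injective.comp e.symm.injective
      set Hi : Subgroup G := (e.symm i : Subgroup G)
      have hmem : Hi ∈ F := hSF (e.symm i).2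
      have hle : (F.erase Hi).inf id ≤ Hi := by
        calc (F.erase Hi).inf id ≤ ⨅ j ∈ {j : Fin (k+1) | j ≠ i}, (e.symm j : Subgroup G) := by
              refine le_iInf₂ fun j hj => ?_
              have : ((e.symm j : S) : Subgroup G) ∈ F.erase Hi := by
                refine Finset.mem_erase.mpr ⟨fun h => hj (hinj h), hSF (e.symm j).2⟩
              exact Finset.inf_le this
          _ = ⨅ j, (e.symm j : Subgroup G) := hi.symm
          _ ≤ Hi := iInf_le _ i
      have key : F.inf id = (F.erase Hi).inf id := by
        conv_lhs => rw [← Finset.insert_erase hmem]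
        rw [Finset.inf_insert]
        exact inf_eq_right.mpr hle
      obtain ⟨F', hF'sub, hF'card, hF'inf⟩ := IH (F.erase Hi)
        (Finset.erase_ssubset hmem) (fun x hx => hF (Finset.erase_subset _ _ hx))
      exact ⟨F', hF'sub.trans (Finset.erase_subset _ _), hF'card, key.trans hF'inf⟩
end

section
/- Let $G$ be a group, $P \leq G$ a subgroup, and $\sim$ an equivalence relation on $P$ with the extension property: whenever $a \sim b$ in $P$ and $c \in P$, there exists $d \in P$ with $c \sim d$ and $ac \sim bd$. Let $X = \{a^{-1} b : a, b \in P,\ a \sim b\}$. Then for every $z \in X$ and $c \in P$, the conjugate $c^{-1} z c$ belongs to $X \cdot X = \{x_1 x_2 : x_1, x_2 \in X\}$. -/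
theorem conj_mem_sq {G : Type*} [Group G] (P : Subgroup G) (r : G → G → Prop)
    (hrefl : ∀ a ∈ P, r a a)
    (hsymm : ∀ a ∈ P, ∀ b ∈ P, r a b → r b a)
    (htrans : ∀ a ∈ P, ∀ b ∈ P, ∀ c ∈ P, r a b → r b c → r a c)
    (hext : ∀ a ∈ P, ∀ b ∈ P, ∀ c ∈ P, r a b → ∃ d ∈ P, r c d ∧ r (a * c) (b * d)) :
    ∀ z ∈ {z : G | ∃ a ∈ P, ∃ b ∈ P, r a b ∧ z = a⁻¹ * b}, ∀ c ∈ P,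
      c⁻¹ * z * c ∈
        {w : G | ∃ x₁ ∈ {z : G | ∃ a ∈ P, ∃ b ∈ P, r a b ∧ z = a⁻¹ * b},
          ∃ x₂ ∈ {z : G | ∃ a ∈ P, ∃ b ∈ P, r a b ∧ z = a⁻¹ * b}, w = x₁ * x₂} := by
  rintro z ⟨a, ha, b, hb, hab, rfl⟩ c hc
  obtain ⟨d, hd, hcd, habd⟩ := hext a ha b hb c hc hab
  exact ⟨(a * c)⁻¹ * (b * d), ⟨a * c, mul_mem ha hc, b * d, mul_mem hb hd, habd, rfl⟩,
    d⁻¹ * c, ⟨d, hd, c, hc, hsymm c hc d hd hcd, rfl⟩, by group⟩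
end
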